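/- Let Ω be a Jordan domain with analytic boundary Γ, f analytic on the closure of Ω with u = Re f solving the Dirichlet problem with boundary data h, where h is analytic on a reflection-invariant neighborhood U of Γ and real-valued on Γ. If h is analytic in the part of U exterior to Γ, then f extends analytically to the part of U exterior to Γ. -/

import Mathlib

open Complex

/-- `Γ` is an analytic Jordan curve: the injective image of the unit circle under a
function analytic on a neighborhood of the circle with nonvanishing derivative. -/
def IsAnalyticJordanCurve (Γ : Set ℂ) : Prop :=
  ∃ φ : ℂ → ℂ, AnalyticOnNhd ℂ φ (Metric.sphere 0 1) ∧
    (∀ w ∈ Metric.sphere (0 : ℂ) 1, deriv φ w ≠ 0) ∧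
    Set.InjOn φ (Metric.sphere 0 1) ∧ Γ = φ '' Metric.sphere 0 1

open Filter Set
open scoped Topology

local notation "conj'" => (starRingEnd ℂ)

private lemma tendsto_conj_punctured (w : ℂ) :
    Tendsto conj' (𝓝[≠] (conj' w)) (𝓝[≠] w) := by
  have h1 : Tendsto conj' (𝓝 (conj' w)) (𝓝 w) := by
    simpa using (Complex.continuous_conj.tendsto (conj' w))
  apply Tendsto.inf h1
  rw [tendsto_principal_principal]
  intro z hz
  simp only [mem_compl_iff, mem_singleton_iff] at hz ⊢
  intro hc
  apply hz
  rw [← hc]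
  simp

private lemma hasDerivAt_conj_conj {g : ℂ → ℂ} {c w : ℂ} (hg : HasDerivAt g c w) :
    HasDerivAt (fun z => conj' (g (conj' z))) (conj' c) (conj' w) := by
  rw [hasDerivAt_iff_tendsto_slope] at hg ⊢
  have key : ∀ z : ℂ, slope (fun z => conj' (g (conj' z))) (conj' w) z
      = conj' (slope g w (conj' z)) := by
    intro z
    rw [slope_def_field, slope_def_field]
    rw [map_div₀, map_sub, map_sub]
    simp
  apply Tendsto.congr (fun z => (key z).symm)
  exact (Complex.continuous_conj.tendsto c).comp (hg.comp (tendsto_conj_punctured w))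

private lemma analyticAt_conj_conj {g : ℂ → ℂ} {w : ℂ} (hg : AnalyticAt ℂ g (conj' w)) :
    AnalyticAt ℂ (fun z => conj' (g (conj' z))) w := by
  set O : Set ℂ := {x | AnalyticAt ℂ g x} with hO
  have hOopen : IsOpen O := isOpen_analyticAt ℂ g
  have hwO : conj' w ∈ O := hg
  have hOpre : IsOpen (conj' ⁻¹' O) := hOopen.preimage Complex.continuous_conj
  have : DifferentiableOn ℂ (fun z => conj' (g (conj' z))) (conj' ⁻¹' O) := by
    intro z hz
    have hgz : AnalyticAt ℂ g (conj' z) := hz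
    have hd : HasDerivAt g (deriv g (conj' z)) (conj' z) :=
      hgz.differentiableAt.hasDerivAt
    have := hasDerivAt_conj_conj hd
    rw [Complex.conj_conj] at this
    exact this.differentiableAt.differentiableWithinAt
  exact this.analyticAt (hOpre.mem_nhds (by simpa using hwO))

private lemma side_subset_omega (Ω : Set ℂ) (hΩ : IsOpen Ω) (Γ : Set ℂ) (hΓ : Γ = frontier Ω)
    {T : Set ℂ} (hT : IsPreconnected T) (hTΓ : ∀ t ∈ T, t ∉ Γ) {x : ℂ} (hx : x ∈ T)
    (hxΩ : x ∈ Ω) : T ⊆ Ω := by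
  have hsub : T ⊆ Ω ∪ (closure Ω)ᶜ := by
    intro t ht
    by_cases hc : t ∈ closure Ω
    · by_cases h : t ∈ Ω
      · exact Or.inl h
      · exact absurd (by rw [hΓ, hΩ.frontier_eq]; exact ⟨hc, h⟩) (hTΓ t ht)
    · exact Or.inr hc
  have hdis : Disjoint Ω (closure Ω)ᶜ := disjoint_compl_right.mono_left subset_closure
  rcases hT.subset_or_subset hΩ isClosed_closure.isOpen_compl hdis hsub with h | h
  · exact h
  · exact absurd (subset_closure hxΩ) (h hx)

private lemma chart_reflection
    (Ω : Set ℂ) (hΩ : IsOpen Ω)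
    (Γ : Set ℂ) (hΓ : Γ = frontier Ω)
    (φ : ℂ → ℂ) (hφan : AnalyticOnNhd ℂ φ (Metric.sphere 0 1))
    (hφd : ∀ w ∈ Metric.sphere (0:ℂ) 1, deriv φ w ≠ 0)
    (hφinj : Set.InjOn φ (Metric.sphere 0 1))
    (hΓφ : Γ = φ '' Metric.sphere 0 1)
    (U : Set ℂ) (hU : IsOpen U) (hΓU : Γ ⊆ U)
    (S : ℂ → ℂ) (hS : AnalyticOnNhd ℂ S U)
    (hSΓ : ∀ z ∈ Γ, S z = conj' z)
    (γ : ℂ) (hγ : γ ∈ Γ) :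
    (∃ᶠ z in 𝓝[≠] γ, z ∈ Γ) ∧
    ∃ N ∈ 𝓝 γ, ∀ z' ∈ N, z' ∉ closure Ω → conj' (S z') ∈ Ω := by
  -- basic data
  obtain ⟨w₀, hw₀s, hw₀γ⟩ : ∃ w₀ ∈ Metric.sphere (0:ℂ) 1, φ w₀ = γ := by
    rw [hΓφ] at hγ; exact hγ
  have hw₀ne : w₀ ≠ 0 := by
    intro h
    rw [h] at hw₀s
    simp at hw₀s
  have hφw : AnalyticAt ℂ φ w₀ := hφan w₀ hw₀s
  have hd₀ : deriv φ w₀ ≠ 0 := hφd w₀ hw₀s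
  have hφs : HasStrictDerivAt φ (deriv φ w₀) w₀ := by
    obtain ⟨p, hp⟩ := hφw
    have h1 := hp.hasStrictDerivAt
    rwa [h1.hasDerivAt.deriv]
  -- the exponential chart
  set emap : ℂ → ℂ := fun ζ => w₀ * Complex.exp ζ with hemapdef
  have hemapc : Continuous emap := continuous_const.mul Complex.continuous_exp
  have hemap0 : emap 0 = w₀ := by simp [hemapdef]
  have hemaps : HasStrictDerivAt emap w₀ 0 := by
    simpa using (Complex.hasStrictDerivAt_exp 0).const_mul w₀
  set Φ : ℂ → ℂ := fun ζ => φ (emap ζ) with hΦdef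
  have hΦ0 : Φ 0 = γ := by rw [hΦdef]; simp only [hemap0]; exact hw₀γ
  have hΦs : HasStrictDerivAt Φ (deriv φ w₀ * w₀) 0 := by
    have h2 : HasStrictDerivAt φ (deriv φ w₀) (emap 0) := by rw [hemap0]; exact hφs
    have := h2.comp 0 hemaps
    simpa [Function.comp_def, hΦdef] using this
  have hΦd : deriv φ w₀ * w₀ ≠ 0 := mul_ne_zero hd₀ hw₀ne
  have hΦc : ContinuousAt Φ 0 := HasStrictFDerivAt.continuousAt hΦs
  have hmap : Filter.map Φ (𝓝 0) = 𝓝 γ := hΦ0 ▸ hΦs.map_nhds_eq hΦd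
  -- injectivity neighborhoods
  set PHφ := HasStrictFDerivAt.toOpenPartialHomeomorph φ (hφs.hasStrictFDerivAt_equiv hd₀) with hPHφ
  have hφsrc : w₀ ∈ PHφ.source := HasStrictFDerivAt.mem_toOpenPartialHomeomorph_source (hφs.hasStrictFDerivAt_equiv hd₀)
  have hφinj' : Set.InjOn φ PHφ.source := PHφ.injOn
  set PHΦ := HasStrictFDerivAt.toOpenPartialHomeomorph Φ (hΦs.hasStrictFDerivAt_equiv hΦd) with hPHΦ
  have hΦsrc : (0:ℂ) ∈ PHΦ.source := HasStrictFDerivAt.mem_toOpenPartialHomeomorph_source (hΦs.hasStrictFDerivAt_equiv hΦd)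
  have hΦinj : Set.InjOn Φ PHΦ.source := PHΦ.injOn
  -- the compact piece of the curve away from w₀
  set K : Set ℂ := φ '' (Metric.sphere 0 1 \ PHφ.source) with hK
  have hKcl : IsClosed K := by
    apply IsCompact.isClosed
    exact ((isCompact_sphere 0 1).diff PHφ.open_source).image_of_continuousOn
      (hφan.continuousOn.mono diff_subset)
  have hγK : γ ∉ K := by
    rintro ⟨v, ⟨hv, hvn⟩, hveq⟩
    exact hvn (hφinj hv hw₀s (hveq.trans hw₀γ.symm) ▸ hφsrc)
  -- eventual conditions near 0
  have hγU : γ ∈ U := hΓU hγ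
  have E1 : ∀ᶠ ζ in 𝓝 (0:ℂ), AnalyticAt ℂ φ (emap ζ) := by
    have : emap ⁻¹' {x | AnalyticAt ℂ φ x} ∈ 𝓝 (0:ℂ) :=
      hemapc.continuousAt.preimage_mem_nhds
        ((isOpen_analyticAt ℂ φ).mem_nhds (by rw [hemap0]; exact hφw))
    exact eventually_of_mem this (fun ζ hζ => hζ)
  have E2 : ∀ᶠ ζ in 𝓝 (0:ℂ), Φ ζ ∈ U := by
    have : Φ ⁻¹' U ∈ 𝓝 (0:ℂ) := hΦc.preimage_mem_nhds (hU.mem_nhds (hΦ0 ▸ hγU))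
    exact eventually_of_mem this (fun ζ hζ => hζ)
  have E3 : ∀ᶠ ζ in 𝓝 (0:ℂ), emap ζ ∈ PHφ.source := by
    have : emap ⁻¹' PHφ.source ∈ 𝓝 (0:ℂ) :=
      hemapc.continuousAt.preimage_mem_nhds (PHφ.open_source.mem_nhds (hemap0 ▸ hφsrc))
    exact eventually_of_mem this (fun ζ hζ => hζ)
  have E4 : ∀ᶠ ζ in 𝓝 (0:ℂ), Φ ζ ∉ K := by
    have : Φ ⁻¹' Kᶜ ∈ 𝓝 (0:ℂ) := hΦc.preimage_mem_nhds (hKcl.isOpen_compl.mem_nhds (hΦ0 ▸ hγK))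
    exact eventually_of_mem this (fun ζ hζ => hζ)
  have E5 : ∀ᶠ ζ in 𝓝 (0:ℂ), ζ ∈ PHΦ.source :=
    eventually_of_mem (PHΦ.open_source.mem_nhds hΦsrc) (fun ζ hζ => hζ)
  obtain ⟨c, hcpos, hball⟩ := Metric.eventually_nhds_iff_ball.mp ((((E1.and E2).and E3).and E4).and E5)
  have hB1 : ∀ ζ ∈ Metric.ball (0:ℂ) c, AnalyticAt ℂ φ (emap ζ) := fun ζ hζ => (hball ζ hζ).1.1.1.1
  have hB2 : ∀ ζ ∈ Metric.ball (0:ℂ) c, Φ ζ ∈ U := fun ζ hζ => (hball ζ hζ).1.1.1.2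
  have hB3 : ∀ ζ ∈ Metric.ball (0:ℂ) c, emap ζ ∈ PHφ.source := fun ζ hζ => (hball ζ hζ).1.1.2
  have hB4 : ∀ ζ ∈ Metric.ball (0:ℂ) c, Φ ζ ∉ K := fun ζ hζ => (hball ζ hζ).1.2
  have hB5 : ∀ ζ ∈ Metric.ball (0:ℂ) c, ζ ∈ PHΦ.source := fun ζ hζ => (hball ζ hζ).2
  -- analyticity of Φ on the ball
  have hΦan : ∀ ζ ∈ Metric.ball (0:ℂ) c, AnalyticAt ℂ Φ ζ := by
    intro ζ hζ
    have hinner : AnalyticAt ℂ emap ζ :=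
      analyticAt_const.mul (Complex.differentiable_exp.analyticAt ζ)
    exact (hB1 ζ hζ).comp hinner
  have hballsym : ∀ ζ : ℂ, ζ ∈ Metric.ball (0:ℂ) c → -(conj' ζ) ∈ Metric.ball (0:ℂ) c := by
    intro ζ hζ
    rw [mem_ball_zero_iff] at hζ ⊢
    simpa using hζ
  -- purely imaginary points map into Γ
  have hsph : ∀ ζ : ℂ, ζ.re = 0 → Φ ζ ∈ Γ := by
    intro ζ hre
    rw [hΓφ]
    refine ⟨emap ζ, ?_, rfl⟩
    rw [mem_sphere_zero_iff_norm]
    rw [hemapdef]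
    simp only [norm_mul]
    rw [mem_sphere_zero_iff_norm.mp hw₀s]
    rw [Complex.norm_exp, hre]
    simp
  -- the sequence along the imaginary axis
  set u : ℕ → ℂ := fun n => Complex.I * ((1 / ((n:ℝ) + 1) : ℝ) : ℂ) with hu
  have hune : ∀ n, u n ≠ 0 := by
    intro n
    simp only [hu, mul_ne_zero_iff]
    constructor
    · exact Complex.I_ne_zero
    · rw [Ne, Complex.ofReal_eq_zero]
      positivity
  have hure : ∀ n, (u n).re = 0 := by intro n; simp [hu]
  have hutend : Tendsto u atTop (𝓝[≠] (0:ℂ)) := by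
    rw [tendsto_nhdsWithin_iff]
    constructor
    · have h0 : Tendsto (fun n : ℕ => (1 / ((n:ℝ) + 1) : ℝ)) atTop (𝓝 0) :=
        tendsto_one_div_add_atTop_nhds_zero_nat
      have h1 : Tendsto (fun x : ℝ => Complex.I * (x:ℂ)) (𝓝 0) (𝓝 0) := by
        have : Continuous (fun x : ℝ => Complex.I * (x:ℂ)) :=
          continuous_const.mul Complex.continuous_ofReal
        simpa using this.tendsto 0
      exact h1.comp h0
    · exact Eventually.of_forall (fun n => hune n)
  -- identity theorem : S ∘ Φ = conj ∘ Φ ∘ (-conj) on the ball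
  have hAan : AnalyticOnNhd ℂ (fun ζ => S (Φ ζ)) (Metric.ball (0:ℂ) c) := by
    intro ζ hζ
    exact (hS _ (hB2 ζ hζ)).comp (hΦan ζ hζ)
  have hBan : AnalyticOnNhd ℂ (fun ζ => conj' (Φ (-(conj' ζ)))) (Metric.ball (0:ℂ) c) := by
    intro ζ hζ
    have houter : AnalyticAt ℂ (fun η => conj' (Φ (conj' η))) (-ζ) := by
      apply analyticAt_conj_conj
      apply hΦan
      have : conj' (-ζ) = -(conj' ζ) := by simp
      rw [this]
      exact hballsym ζ hζ
    have hneg : AnalyticAt ℂ (fun η : ℂ => -η) ζ := analyticAt_id.neg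
    have heq : (fun ζ : ℂ => conj' (Φ (-(conj' ζ)))) = (fun η => conj' (Φ (conj' η))) ∘ (fun η : ℂ => -η) := by
      funext η
      simp [Function.comp_def]
    rw [heq]
    exact houter.comp hneg
  have hfreq : ∃ᶠ ζ in 𝓝[≠] (0:ℂ), S (Φ ζ) = conj' (Φ (-(conj' ζ))) := by
    apply hutend.frequently
    apply Frequently.of_forall
    intro n
    have hΓn : Φ (u n) ∈ Γ := hsph (u n) (hure n)
    have hfix : -(conj' (u n)) = u n := by
      simp only [hu]
      rw [map_mul, Complex.conj_I, Complex.conj_ofReal]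
      ring
    rw [hfix, hSΓ _ hΓn]
  have hEq : Set.EqOn (fun ζ => S (Φ ζ)) (fun ζ => conj' (Φ (-(conj' ζ)))) (Metric.ball (0:ℂ) c) :=
    hAan.eqOn_of_preconnected_of_frequently_eq hBan (convex_ball 0 c).isPreconnected
      (Metric.mem_ball_self hcpos) hfreq
  -- Γ detection in the ball
  have hdet : ∀ ζ ∈ Metric.ball (0:ℂ) c, Φ ζ ∈ Γ → ζ.re = 0 := by
    intro ζ hζ hmem
    rw [hΓφ] at hmem
    obtain ⟨v, hv, hveq⟩ := hmem
    have hvsrc : v ∈ PHφ.source := by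
      by_contra hvn
      exact hB4 ζ hζ ⟨v, ⟨hv, hvn⟩, hveq⟩
    have : emap ζ = v := hφinj' (hB3 ζ hζ) hvsrc hveq.symm
    have hnorm : ‖emap ζ‖ = 1 := by rw [this]; exact mem_sphere_zero_iff_norm.mp hv
    rw [hemapdef] at hnorm
    simp only [norm_mul] at hnorm
    rw [mem_sphere_zero_iff_norm.mp hw₀s, one_mul, Complex.norm_exp] at hnorm
    exact (Real.exp_eq_one_iff _).mp hnorm
  -- first conclusion : Γ accumulates at γ
  have hfreqΓ : ∃ᶠ z in 𝓝[≠] γ, z ∈ Γ := by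
    have htendΦu : Tendsto (fun n => Φ (u n)) atTop (𝓝[≠] γ) := by
      rw [tendsto_nhdsWithin_iff]
      constructor
      · have := hΦc.tendsto
        rw [hΦ0] at this
        exact this.comp (hutend.mono_right nhdsWithin_le_nhds)
      · have hev : ∀ᶠ n in atTop, u n ∈ Metric.ball (0:ℂ) c :=
          (hutend.mono_right nhdsWithin_le_nhds).eventually_mem (Metric.ball_mem_nhds 0 hcpos)
        filter_upwards [hev] with n hn
        intro hcontra
        apply hune n
        exact hΦinj (hB5 _ hn) hΦsrc (by rw [hcontra, hΦ0])
    apply htendΦu.frequently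
    exact Frequently.of_forall (fun n => hsph (u n) (hure n))
  refine ⟨hfreqΓ, Φ '' Metric.ball 0 c, ?_, ?_⟩
  · rw [← hmap]
    exact image_mem_map (Metric.ball_mem_nhds 0 hcpos)
  intro z' hz' hz'cl
  obtain ⟨ζ', hζ', rfl⟩ := hz'
  -- the reflection in the chart
  have hσ : conj' (S (Φ ζ')) = Φ (-(conj' ζ')) := by
    have := hEq hζ'
    simp only at this
    rw [this, Complex.conj_conj]
  have hΓcl : Γ ⊆ closure Ω := by rw [hΓ]; exact frontier_subset_closure
  have hre' : ζ'.re ≠ 0 := fun h => hz'cl (hΓcl (hsph ζ' h))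
  -- a point of Ω in the chart ball
  have hγcl : γ ∈ closure Ω := hΓcl hγ
  obtain ⟨x, hxN, hxΩ⟩ : (Φ '' Metric.ball 0 c ∩ Ω).Nonempty := by
    apply mem_closure_iff_nhds.mp hγcl
    rw [← hmap]
    exact image_mem_map (Metric.ball_mem_nhds 0 hcpos)
  obtain ⟨ξ, hξ, rfl⟩ := hxN
  have hreξ : ξ.re ≠ 0 := by
    intro h
    have := hsph ξ h
    rw [hΓ, hΩ.frontier_eq] at this
    exact this.2 hxΩ
  -- generic side argument
  have key : ∀ Q : Set ℂ, Convex ℝ Q → (∀ ζ ∈ Q, ζ.re ≠ 0) →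
      ∀ ζ ∈ Metric.ball (0:ℂ) c ∩ Q, ∀ ξ' ∈ Metric.ball (0:ℂ) c ∩ Q, Φ ξ' ∈ Ω → Φ ζ ∈ Ω := by
    intro Q hQconv hQre ζ hζQ ξ' hξ'Q hΦξ'
    have hT : IsPreconnected (Φ '' (Metric.ball (0:ℂ) c ∩ Q)) := by
      apply IsPreconnected.image ((convex_ball (0:ℂ) c).inter hQconv).isPreconnected
      intro η hη
      exact (hΦan η hη.1).continuousAt.continuousWithinAt
    have hTΓ : ∀ t ∈ Φ '' (Metric.ball (0:ℂ) c ∩ Q), t ∉ Γ := by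
      rintro t ⟨η, ⟨hηb, hηQ⟩, rfl⟩ htΓ
      exact hQre η hηQ (hdet η hηb htΓ)
    exact side_subset_omega Ω hΩ Γ hΓ hT hTΓ (mem_image_of_mem Φ hξ'Q) hΦξ'
      (mem_image_of_mem Φ hζQ)
  have hrefl_mem : -(conj' ζ') ∈ Metric.ball (0:ℂ) c := hballsym ζ' hζ'
  have hrefl_re : (-(conj' ζ')).re = -ζ'.re := by simp
  rw [hσ]
  rcases hre'.lt_or_gt with hn | hp
  · rcases hreξ.lt_or_gt with hξn | hξp
    · -- both negative : z' would be in Ω, contradiction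
      exfalso
      apply hz'cl
      apply subset_closure
      exact key {η : ℂ | η.re < 0} (convex_halfSpace_re_lt 0) (fun η hη => ne_of_lt hη)
        ζ' ⟨hζ', hn⟩ ξ ⟨hξ, hξn⟩ hxΩ
    · -- ζ' negative, ξ positive : reflection is positive
      exact key {η : ℂ | 0 < η.re} (convex_halfSpace_re_gt 0) (fun η hη => ne_of_gt hη)
        (-(conj' ζ')) ⟨hrefl_mem, by rw [mem_setOf_eq, hrefl_re]; linarith⟩ ξ ⟨hξ, hξp⟩ hxΩ
  · rcases hreξ.lt_or_gt with hξn | hξp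
    · exact key {η : ℂ | η.re < 0} (convex_halfSpace_re_lt 0) (fun η hη => ne_of_lt hη)
        (-(conj' ζ')) ⟨hrefl_mem, by rw [mem_setOf_eq, hrefl_re]; linarith⟩ ξ ⟨hξ, hξn⟩ hxΩ
    · exfalso
      apply hz'cl
      apply subset_closure
      exact key {η : ℂ | 0 < η.re} (convex_halfSpace_re_gt 0) (fun η hη => ne_of_gt hη)
        ζ' ⟨hζ', hp⟩ ξ ⟨hξ, hξp⟩ hxΩ

/-- **Theorem 1 of the paper (analytic continuation of `f` across `Γ`).**
If the boundary data `h` is analytic in a reflection-invariant neighborhood `U` of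
the analytic boundary curve `Γ = frontier Ω` and real on `Γ`, and `f` is analytic on
`closure Ω` with `Re f = h` on `Γ`, then `f` extends analytically to `Ω ∪ U`
(in particular to the part of `U` exterior to `Γ`). -/
theorem laplace_solution_extends_across_boundary
    (Ω : Set ℂ) (hΩ : IsOpen Ω) (hΩconn : IsConnected Ω)
    (hΩbd : Bornology.IsBounded Ω)
    (Γ : Set ℂ) (hΓ : Γ = frontier Ω) (hΓan : IsAnalyticJordanCurve Γ)
    (U : Set ℂ) (hU : IsOpen U) (hUconn : IsConnected U) (hΓU : Γ ⊆ U)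
    (S : ℂ → ℂ) (hS : AnalyticOnNhd ℂ S U)
    (hSΓ : ∀ z ∈ Γ, S z = (starRingEnd ℂ) z)
    (hSU : ∀ z ∈ U, (starRingEnd ℂ) (S z) ∈ U)
    (hSinv : ∀ z ∈ U, (starRingEnd ℂ) (S ((starRingEnd ℂ) (S z))) = z)
    (h : ℂ → ℂ) (hh : AnalyticOnNhd ℂ h U)
    (hhΓ : ∀ z ∈ Γ, (h z).im = 0)
    (f : ℂ → ℂ) (hf : AnalyticOnNhd ℂ f (closure Ω))
    (hbc : ∀ z ∈ Γ, (f z).re = (h z).re) :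
    ∃ F : ℂ → ℂ, AnalyticOnNhd ℂ F (Ω ∪ U) ∧ ∀ z ∈ Ω, F z = f z := by
  classical
  obtain ⟨φ, hφan, hφd, hφinj, hΓφ⟩ := hΓan
  set σ : ℂ → ℂ := fun z => conj' (S z) with hσdef
  set G : ℂ → ℂ := fun z => h z + conj' (h (σ z)) - conj' (f (σ z)) with hGdef
  have hΓclosedset : IsClosed Γ := hΓ ▸ isClosed_frontier
  have hΓsubcl : Γ ⊆ closure Ω := hΓ ▸ frontier_subset_closure
  have hΓne : Γ.Nonempty := by
    rw [hΓφ]; exact ⟨φ 1, 1, by simp, rfl⟩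
  have hclosure : closure Ω = Ω ∪ Γ := by
    rw [hΓ, hΩ.frontier_eq, union_diff_cancel subset_closure]
  -- analyticity of G
  have hGan : ∀ z₀ ∈ U, AnalyticAt ℂ f (σ z₀) → AnalyticAt ℂ G z₀ := by
    intro z₀ hz₀ hfσ
    have hSz : AnalyticAt ℂ S z₀ := hS z₀ hz₀
    have hσU : σ z₀ ∈ U := hSU z₀ hz₀
    have t1 : AnalyticAt ℂ (fun z => conj' (h (conj' (S z)))) z₀ := by
      have houter : AnalyticAt ℂ (fun y => conj' (h (conj' y))) (S z₀) :=
        analyticAt_conj_conj (hh _ hσU)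
      exact houter.comp hSz
    have t2 : AnalyticAt ℂ (fun z => conj' (f (conj' (S z)))) z₀ := by
      have houter : AnalyticAt ℂ (fun y => conj' (f (conj' y))) (S z₀) :=
        analyticAt_conj_conj hfσ
      exact houter.comp hSz
    exact ((hh z₀ hz₀).add t1).sub t2
  -- f = G on Γ
  have hfG : ∀ γ ∈ Γ, f γ = G γ := by
    intro γ hγ
    have hσγ : σ γ = γ := by rw [hσdef]; simp only [hSΓ γ hγ]; simp
    simp only [hGdef, hσγ]
    apply Complex.ext
    · have := hbc γ hγ
      simp only [Complex.add_re, Complex.sub_re, Complex.conj_re]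
      linarith
    · simp only [Complex.add_im, Complex.sub_im, Complex.conj_im]
      ring
  -- the reflection maps exterior points of U into Ω
  have crux : ∀ z ∈ U, z ∉ closure Ω → σ z ∈ Ω := by
    intro z hzU hzcl
    have hzΓ : z ∉ Γ := fun hmem => hzcl (hΓsubcl hmem)
    set W := U \ Γ with hW
    have hWopen : IsOpen W := hU.sdiff hΓclosedset
    have hzW : z ∈ W := ⟨hzU, hzΓ⟩
    set C := connectedComponentIn W z with hC
    have hzC : z ∈ C := mem_connectedComponentIn hzW
    have hCopen : IsOpen C := hWopen.connectedComponentIn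
    have hCW : C ⊆ W := connectedComponentIn_subset W z
    have hCΓ : ∀ t ∈ C, t ∉ Γ := fun t ht => (hCW ht).2
    have hdis : Disjoint Ω (closure Ω)ᶜ := disjoint_compl_right.mono_left subset_closure
    have hCsub : C ⊆ Ω ∪ (closure Ω)ᶜ := by
      intro t ht
      by_cases hc : t ∈ closure Ω
      · left
        rcases (hclosure ▸ hc) with h1 | h1
        · exact h1
        · exact absurd h1 (hCΓ t ht)
      · exact Or.inr hc
    have hCext : C ⊆ (closure Ω)ᶜ := by
      rcases isPreconnected_connectedComponentIn.subset_or_subset hΩ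
        isClosed_closure.isOpen_compl hdis hCsub with h1 | h1
      · exact absurd (subset_closure (h1 hzC)) hzcl
      · exact h1
    -- C has a boundary point on Γ
    have hbd : ∃ γ ∈ Γ, γ ∈ closure C := by
      by_contra hcon
      push_neg at hcon
      have hclosedU : ∀ p ∈ U, p ∈ closure C → p ∈ C := by
        intro p hpU hpcl
        have hpΓ : p ∉ Γ := fun hpΓ => (hcon p hpΓ) hpcl
        have hpW : p ∈ W := ⟨hpU, hpΓ⟩
        have hnb : connectedComponentIn W p ∈ 𝓝 p :=
          hWopen.connectedComponentIn.mem_nhds (mem_connectedComponentIn hpW)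
        obtain ⟨q, hq1, hq2⟩ := mem_closure_iff_nhds.mp hpcl _ hnb
        have hp : p ∈ connectedComponentIn W p := mem_connectedComponentIn hpW
        rw [connectedComponentIn_eq hq1] at hp
        rw [← connectedComponentIn_eq hq2] at hp
        exact hp
      have hUsub : U ⊆ C ∪ (closure C)ᶜ := by
        intro p hp
        by_cases h1 : p ∈ closure C
        · exact Or.inl (hclosedU p hp h1)
        · exact Or.inr h1
      have hdis2 : Disjoint C (closure C)ᶜ := disjoint_compl_right.mono_left subset_closure
      rcases hUconn.isPreconnected.subset_or_subset hCopen isClosed_closure.isOpen_compl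
        hdis2 hUsub with h1 | h1
      · obtain ⟨γ, hγ⟩ := hΓne
        exact (hCΓ γ (h1 (hΓU hγ))) hγ
      · exact (h1 hzU) (subset_closure hzC)
    obtain ⟨γ, hγΓ, hγcl⟩ := hbd
    obtain ⟨-, N, hN, hNprop⟩ := chart_reflection Ω hΩ Γ hΓ φ hφan hφd hφinj hΓφ U hU hΓU
      S hS hSΓ γ hγΓ
    obtain ⟨z', hz'N, hz'C⟩ := mem_closure_iff_nhds.mp hγcl N hN
    have hz'ext : z' ∉ closure Ω := hCext hz'C
    have hσz' : σ z' ∈ Ω := hNprop z' hz'N hz'ext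
    have hσcont : ContinuousOn σ C := by
      apply Complex.continuous_conj.comp_continuousOn
      exact (hS.continuousOn).mono (fun t ht => (hCW ht).1)
    have hσC : IsPreconnected (σ '' C) :=
      isPreconnected_connectedComponentIn.image σ hσcont
    have hσCΓ : ∀ t ∈ σ '' C, t ∉ Γ := by
      rintro t ⟨s, hsC, rfl⟩ htΓ
      have hsU : s ∈ U := (hCW hsC).1
      have h1 : σ (σ s) = s := hSinv s hsU
      have h2 : σ (σ s) = σ s := by
        show conj' (S (σ s)) = σ s; rw [hSΓ _ htΓ, Complex.conj_conj]
      rw [h2] at h1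
      exact (hCΓ s hsC) (h1 ▸ htΓ)
    exact side_subset_omega Ω hΩ Γ hΓ hσC hσCΓ (mem_image_of_mem σ hz'C) hσz'
      (mem_image_of_mem σ hzC)
  -- the extension
  set F : ℂ → ℂ := fun z => if z ∈ closure Ω then f z else G z with hF
  refine ⟨F, ?_, ?_⟩
  · intro z₀ hz₀
    by_cases hz₀cl : z₀ ∈ closure Ω
    · rcases (hclosure ▸ hz₀cl) with hΩ₀ | hΓ₀
      · -- interior point
        have hev : F =ᶠ[𝓝 z₀] f := by
          filter_upwards [hΩ.mem_nhds hΩ₀] with w hw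
          simp [hF, subset_closure hw]
        exact (hf z₀ hz₀cl).congr hev.symm
      · -- boundary point
        have hz₀U : z₀ ∈ U := hΓU hΓ₀
        obtain ⟨hfreq, -⟩ := chart_reflection Ω hΩ Γ hΓ φ hφan hφd hφinj hΓφ U hU hΓU
          S hS hSΓ z₀ hΓ₀
        have hfz : AnalyticAt ℂ f z₀ := hf z₀ hz₀cl
        have hσz₀ : σ z₀ = z₀ := by rw [hσdef]; simp only [hSΓ _ hΓ₀]; simp
        have hGz : AnalyticAt ℂ G z₀ := hGan z₀ hz₀U (by rw [hσz₀]; exact hfz)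
        have hfreq2 : ∃ᶠ w in 𝓝[≠] z₀, f w = G w := hfreq.mono (fun w hw => hfG w hw)
        have hev : f =ᶠ[𝓝 z₀] G := (hfz.frequently_eq_iff_eventually_eq hGz).mp hfreq2
        have hevF : F =ᶠ[𝓝 z₀] f := by
          filter_upwards [hev] with w hw
          by_cases hwc : w ∈ closure Ω
          · simp [hF, hwc]
          · simp [hF, hwc, hw]
        exact hfz.congr hevF.symm
    · -- exterior point
      have hz₀U : z₀ ∈ U := by
        rcases hz₀ with h1 | h1
        · exact absurd (subset_closure h1) hz₀cl
        · exact h1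
      have hσΩ : σ z₀ ∈ Ω := crux z₀ hz₀U hz₀cl
      have hGz : AnalyticAt ℂ G z₀ := hGan z₀ hz₀U (hf _ (subset_closure hσΩ))
      have hevF : F =ᶠ[𝓝 z₀] G := by
        filter_upwards [isClosed_closure.isOpen_compl.mem_nhds hz₀cl] with w hw
        simp [hF, (mem_compl_iff _ _).mp hw]
      exact hGz.congr hevF.symm
  · intro z hz
    simp [hF, subset_closure hz]
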